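/- arXiv:2304.14101 — 8 statements merged into one kernel-verified Lean document; each statement's English description precedes it below -/
import Mathlib

section
/- For non-empty subsets C₁, C₂ of a proper metric space M, the pair (C₁, C₂) is HBI (i.e., for all C₁' at finite Hausdorff distance from C₁ and C₂' at finite Hausdorff distance from C₂, the intersection C₁' ∩ C₂' is bounded) if and only if for every r ≥ 0 the intersection C₁ ∩ N̄_r(C₂) is bounded, where N̄_r(C) = {p ∈ M : ∃ c ∈ C, d(p,c) ≤ r}. -/
/-- The closed `r`-neighborhood of a subset `C` of a metric space. -/
def closedNbhd {M : Type*} [MetricSpace M] (C : Set M) (r : ℝ) : Set M :=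
  {p | ∃ c ∈ C, dist p c ≤ r}

/-- Two subsets are equivalent (`∼`) if they are at finite Hausdorff distance. -/
def simSet {M : Type*} [MetricSpace M] (C₁ C₂ : Set M) : Prop :=
  ∃ r ≥ (0 : ℝ), C₁ ⊆ closedNbhd C₂ r ∧ C₂ ⊆ closedNbhd C₁ r

/-- The pair `(C₁, C₂)` is HBI in `M`. -/
def IsHBI {M : Type*} [MetricSpace M] (C₁ C₂ : Set M) : Prop :=
  ∀ C₁' C₂' : Set M, simSet C₁ C₁' → simSet C₂ C₂' → Bornology.IsBounded (C₁' ∩ C₂')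

lemma bounded_closedNbhd {M : Type*} [MetricSpace M] {A : Set M}
    (hA : Bornology.IsBounded A) (s : ℝ) : Bornology.IsBounded (closedNbhd A s) := by
  rcases A.eq_empty_or_nonempty with h | ⟨x, hx⟩
  · have : closedNbhd A s = ∅ := by
      ext p; simp [closedNbhd, h]
    simp [this]
  · obtain ⟨R, hR⟩ := (Metric.isBounded_iff_subset_closedBall x).1 hA
    refine (Metric.isBounded_closedBall (x := x) (r := s + R)).subset ?_
    rintro p ⟨a, ha, hpa⟩
    have hax : dist a x ≤ R := hR ha
    have : dist p x ≤ s + R :=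
      (dist_triangle p a x).trans (add_le_add hpa hax)
    simpa [Metric.mem_closedBall] using this

theorem hbi_iff_inter_nbhd_bounded {M : Type*} [MetricSpace M] [ProperSpace M]
    (C₁ C₂ : Set M) (h₁ : C₁.Nonempty) (h₂ : C₂.Nonempty) :
    IsHBI C₁ C₂ ↔ ∀ r ≥ (0 : ℝ), Bornology.IsBounded (C₁ ∩ closedNbhd C₂ r) := by
  constructor
  · intro h r hr
    have hsim1 : simSet C₁ C₁ :=
      ⟨0, le_refl 0, fun p hp => ⟨p, hp, by simp⟩, fun p hp => ⟨p, hp, by simp⟩⟩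
    have hsim2 : simSet C₂ (closedNbhd C₂ r) :=
      ⟨r, hr, fun p hp => ⟨p, ⟨p, hp, by simpa using hr⟩, by simpa using hr⟩,
        fun p hp => hp⟩
    exact h _ _ hsim1 hsim2
  · rintro h C₁' C₂' ⟨s, hs, hs1, hs2⟩ ⟨t, ht, ht1, ht2⟩
    have hb := h (s + t) (by linarith)
    refine (bounded_closedNbhd hb s).subset ?_
    rintro p ⟨hp1, hp2⟩
    obtain ⟨c₁, hc₁, hd₁⟩ := hs2 hp1
    obtain ⟨c₂, hc₂, hd₂⟩ := ht2 hp2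
    refine ⟨c₁, ⟨hc₁, c₂, hc₂, ?_⟩, hd₁⟩
    calc dist c₁ c₂ ≤ dist c₁ p + dist p c₂ := dist_triangle _ _ _
      _ ≤ s + t := add_le_add (by rwa [dist_comm]) hd₂
end

section
/- Let G be a locally compact Hausdorff topological group and H₁, H₂ non-empty subsets of G. Then the pair (H₁,H₂) is proper in G (i.e., for all compact D₁, D₂ ⊆ G the intersection (D₁·H₁·D₁⁻¹) ∩ (D₂·H₂·D₂⁻¹) is relatively compact) if and only if for every compact subset D of G the intersection H₁ ∩ (D·H₂·D⁻¹) is relatively compact in G. -/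
open scoped Pointwise

/-- `N̄_D(H) = D · H · D⁻¹` for subsets of a group. -/
def grpNbhd {G : Type*} [Group G] (D H : Set G) : Set G := D * H * D⁻¹

/-- A pair `(H₁, H₂)` of subsets of a topological group is proper in `G`. -/
def IsProperPair {G : Type*} [Group G] [TopologicalSpace G] (H₁ H₂ : Set G) : Prop :=
  ∀ D₁ D₂ : Set G, IsCompact D₁ → IsCompact D₂ →
    IsCompact (closure (grpNbhd D₁ H₁ ∩ grpNbhd D₂ H₂))

theorem properPair_iff {G : Type*} [Group G] [TopologicalSpace G] [IsTopologicalGroup G]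
    [LocallyCompactSpace G] [T2Space G]
    (H₁ H₂ : Set G) (h₁ : H₁.Nonempty) (h₂ : H₂.Nonempty) :
    IsProperPair H₁ H₂ ↔
      ∀ D : Set G, IsCompact D → IsCompact (closure (H₁ ∩ grpNbhd D H₂)) := by
  constructor
  · intro hp D hD
    have h1eq : grpNbhd (1 : Set G) H₁ = H₁ := by
      simp [grpNbhd]
    have hone : IsCompact (1 : Set G) := by
      rw [show (1 : Set G) = {1} from rfl]; exact isCompact_singleton
    have := hp 1 D hone hD
    rwa [h1eq] at this
  · intro h D₁ D₂ hD₁ hD₂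
    have hK : IsCompact (closure (H₁ ∩ grpNbhd (D₁⁻¹ * D₂) H₂)) := h _ (hD₁.inv.mul hD₂)
    have hC : IsCompact (D₁ * closure (H₁ ∩ grpNbhd (D₁⁻¹ * D₂) H₂) * D₁⁻¹) :=
      (hD₁.mul hK).mul hD₁.inv
    apply hC.closure_of_subset
    rintro x ⟨⟨_, ⟨a, ha, h1, hh1, rfl⟩, b, hb, rfl⟩, hx2⟩
    obtain ⟨_, ⟨c, hc, h2, hh2, rfl⟩, d, hd, heq⟩ := hx2
    have hmem : h1 ∈ H₁ ∩ grpNbhd (D₁⁻¹ * D₂) H₂ := by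
      refine ⟨hh1, ?_⟩
      refine ⟨a⁻¹ * c * h2, ⟨a⁻¹ * c, Set.mul_mem_mul (Set.inv_mem_inv.mpr ha) hc,
        h2, hh2, rfl⟩, d * b⁻¹, ?_, ?_⟩
      · rw [Set.mem_inv]
        have hb' : b⁻¹ ∈ D₁ := Set.mem_inv.mp hb
        have hd' : d⁻¹ ∈ D₂ := Set.mem_inv.mp hd
        simpa [mul_comm] using Set.mul_mem_mul (Set.inv_mem_inv.mpr hb') hd'
      · have heq' : c * h2 * d = a * h1 * b := heq
        show a⁻¹ * c * h2 * (d * b⁻¹) = h1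
        have : a⁻¹ * c * h2 * (d * b⁻¹) = a⁻¹ * (c * h2 * d) * b⁻¹ := by group
        rw [this, heq']; group
    exact ⟨a * h1, ⟨a, ha, h1, subset_closure hmem, rfl⟩, b, hb, rfl⟩
end

section
/- Let G be a σ-compact locally compact Hausdorff topological group and H₁, H₂ non-empty subsets of G. Then H₁ ∼ H₂ (i.e., there exists a compact D ⊆ G with H₁ ⊆ D·H₂·D⁻¹ and H₂ ⊆ D·H₁·D⁻¹) if and only if the pairs (H₁, H') and (H₂, H') are simultaneously proper or not proper for every non-empty subset H' of G. -/
open scoped Pointwise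

/-- `H₁ ∼ H₂` in a topological group `G`. -/
def simGrp {G : Type*} [Group G] [TopologicalSpace G] (H₁ H₂ : Set G) : Prop :=
  ∃ D : Set G, IsCompact D ∧ H₁ ⊆ grpNbhd D H₂ ∧ H₂ ⊆ grpNbhd D H₁

section Aux

variable {G : Type*} [Group G]

lemma grpNbhd_mono {D D' H : Set G} (h : D ⊆ D') : grpNbhd D H ⊆ grpNbhd D' H :=
  Set.mul_subset_mul (Set.mul_subset_mul h Set.Subset.rfl) (Set.inv_subset_inv.2 h)

lemma mem_grpNbhd {D H : Set G} {x : G} :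
    x ∈ grpNbhd D H ↔ ∃ a ∈ D, ∃ y ∈ H, ∃ b ∈ D, x = a * y * b⁻¹ := by
  constructor
  · rintro ⟨_, ⟨a, ha, y, hy, rfl⟩, c, hc, rfl⟩
    rcases Set.mem_inv.1 hc with hc'
    exact ⟨a, ha, y, hy, c⁻¹, by simpa using hc', by simp⟩
  · rintro ⟨a, ha, y, hy, b, hb, rfl⟩
    exact ⟨a * y, ⟨a, ha, y, hy, rfl⟩, b⁻¹, Set.inv_mem_inv.2 hb, rfl⟩

lemma grpNbhd_trans {D D' H H' : Set G} (h : H ⊆ grpNbhd D' H') :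
    grpNbhd D H ⊆ grpNbhd (D * D') H' := by
  rintro x hx
  rcases mem_grpNbhd.1 hx with ⟨a, ha, y, hy, b, hb, rfl⟩
  rcases mem_grpNbhd.1 (h hy) with ⟨c, hc, z, hz, d, hd, rfl⟩
  refine mem_grpNbhd.2 ⟨a * c, Set.mul_mem_mul ha hc, z, hz, b * d, Set.mul_mem_mul hb hd, ?_⟩
  group

lemma grpNbhd_one (H : Set G) : grpNbhd (1 : Set G) H = H := by
  simp [grpNbhd]

variable [TopologicalSpace G] [IsTopologicalGroup G]

lemma isProperPair_of_sub {H₁ H₂ : Set G} (D : Set G) (hD : IsCompact D)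
    (hsub : H₁ ⊆ grpNbhd D H₂) {H' : Set G} (hp : IsProperPair H₂ H') :
    IsProperPair H₁ H' := by
  intro D₁ D₂ hD₁ hD₂
  have h1 : grpNbhd D₁ H₁ ⊆ grpNbhd (D₁ * D) H₂ := grpNbhd_trans hsub
  have := hp (D₁ * D) D₂ (hD₁.mul hD) hD₂
  exact this.of_isClosed_subset isClosed_closure
    (closure_mono (Set.inter_subset_inter_left _ h1))

end Aux

section Main

variable {G : Type*} [Group G] [TopologicalSpace G] [IsTopologicalGroup G]
  [LocallyCompactSpace G] [T2Space G] [SigmaCompactSpace G]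

/-- Main construction: if `H₂` is in no compact neighborhood of `H₁`, there is a subset
separating them by properness. -/
lemma exists_separating (H₁ H₂ : Set G) (h₁ : H₁.Nonempty)
    (hbad : ∀ D : Set G, IsCompact D → ¬ H₂ ⊆ grpNbhd D H₁) :
    ∃ H' : Set G, H'.Nonempty ∧ IsProperPair H₁ H' ∧ ¬ IsProperPair H₂ H' := by
  obtain ⟨a, ha⟩ := h₁
  set K := CompactExhaustion.choice G with hK
  -- symmetric enlargements
  set L : ℕ → Set G := fun n => K n ∪ (K n)⁻¹ ∪ {1} with hL
  set C : ℕ → Set G := fun n => L n * L n with hC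
  set E : ℕ → Set G := fun n => C n * C n with hE
  have hLcomp : ∀ n, IsCompact (L n) := fun n =>
    ((K.isCompact n).union (K.isCompact n).inv).union isCompact_singleton
  have hCcomp : ∀ n, IsCompact (C n) := fun n => (hLcomp n).mul (hLcomp n)
  have hEcomp : ∀ n, IsCompact (E n) := fun n => (hCcomp n).mul (hCcomp n)
  have hLsymm : ∀ n, (L n)⁻¹ = L n := by
    intro n
    simp only [hL, Set.union_inv, Set.inv_singleton, inv_one, inv_inv]
    rw [Set.union_comm (K n)⁻¹ (K n)]
  have hCsymm : ∀ n, (C n)⁻¹ = C n := by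
    intro n
    rw [hC]
    simp only [mul_inv_rev, hLsymm]
  have hEsymm : ∀ n, (E n)⁻¹ = E n := by
    intro n
    rw [hE]
    simp only [mul_inv_rev, hCsymm]
  have hone : ∀ n, (1 : G) ∈ L n := fun n => by simp [hL]
  have honeC : ∀ n, (1 : G) ∈ C n := fun n => by
    simpa using Set.mul_mem_mul (hone n) (hone n)
  have hKL : ∀ n, K n ⊆ L n := fun n => fun x hx =>
    Set.mem_union_left _ (Set.mem_union_left _ hx)
  have hLC : ∀ n, L n ⊆ C n := by
    intro n x hx
    simpa using Set.mul_mem_mul hx (hone n)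
  have hCE : ∀ n, C n ⊆ E n := by
    intro n x hx
    simpa using Set.mul_mem_mul hx (honeC n)
  have hLmono : ∀ {m n : ℕ}, m ≤ n → L m ⊆ L n := by
    intro m n hmn
    have hKmn := K.subset hmn
    intro x hx
    rcases hx with (h | h) | h
    · exact Set.mem_union_left _ (Set.mem_union_left _ (hKmn h))
    · exact Set.mem_union_left _ (Set.mem_union_right _ (Set.inv_subset_inv.2 hKmn h))
    · exact Set.mem_union_right _ h
  have hCmono : ∀ {m n : ℕ}, m ≤ n → C m ⊆ C n := fun hmn =>
    Set.mul_subset_mul (hLmono hmn) (hLmono hmn)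
  have hEmono : ∀ {m n : ℕ}, m ≤ n → E m ⊆ E n := fun hmn =>
    Set.mul_subset_mul (hCmono hmn) (hCmono hmn)
  -- choose the escaping sequence
  have hchoose : ∀ n : ℕ, ∃ x, x ∈ H₂ ∧ x ∉ grpNbhd (E n) H₁ := by
    intro n
    rcases Set.not_subset.1 (hbad (E n) (hEcomp n)) with ⟨x, hx1, hx2⟩
    exact ⟨x, hx1, hx2⟩
  choose f hfH₂ hfnot using hchoose
  refine ⟨Set.range f, ⟨f 0, Set.mem_range_self 0⟩, ?_, ?_⟩
  · -- (H₁, range f) is proper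
    intro D₁ D₂ hD₁ hD₂
    obtain ⟨m₁, hm₁⟩ := K.exists_superset_of_isCompact hD₁
    obtain ⟨m₂, hm₂⟩ := K.exists_superset_of_isCompact hD₂
    set m := max m₁ m₂ with hm
    have hD₁m : D₁ ⊆ C m := fun x hx => hLC m (hLmono (le_max_left m₁ m₂) (hKL m₁ (hm₁ hx)))
    have hD₂m : D₂ ⊆ C m := fun x hx => hLC m (hLmono (le_max_right m₁ m₂) (hKL m₂ (hm₂ hx)))
    -- the big compact set
    set T : Set G := C m * (f '' Set.Iio m) * (C m)⁻¹ with hT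
    have hTcomp : IsCompact T := by
      have hfin : (f '' Set.Iio m).Finite := (Set.finite_Iio m).image f
      exact ((hCcomp m).mul hfin.isCompact).mul (hCcomp m).inv
    have hsub : grpNbhd D₁ H₁ ∩ grpNbhd D₂ (Set.range f) ⊆ T := by
      rintro x ⟨hx1, hx2⟩
      have hx1' : x ∈ grpNbhd (C m) H₁ := grpNbhd_mono hD₁m hx1
      have hx2' : x ∈ grpNbhd (C m) (Set.range f) := grpNbhd_mono hD₂m hx2
      rcases mem_grpNbhd.1 hx2' with ⟨p, hp, y, ⟨n, rfl⟩, q, hq, rfl⟩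
      rcases mem_grpNbhd.1 hx1' with ⟨c, hc, z, hz, d, hd, heq⟩
      by_cases hnm : n < m
      · exact Set.mul_mem_mul
          (Set.mul_mem_mul hp (Set.mem_image_of_mem f hnm)) (Set.inv_mem_inv.2 hq)
      · -- contradiction with f n ∉ grpNbhd (E n) H₁
        exfalso
        push_neg at hnm
        apply hfnot n
        have heq2 : f n = (p⁻¹ * c) * z * ((q⁻¹ * d)⁻¹) := by
          have h3 : f n = p⁻¹ * (p * f n * q⁻¹) * q := by group
          rw [h3, heq]; group
        have hpc : p⁻¹ * c ∈ E n := hEmono hnm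
          (Set.mul_mem_mul (by rw [← hCsymm m]; exact Set.inv_mem_inv.2 hp) hc)
        have hqd : q⁻¹ * d ∈ E n := hEmono hnm
          (Set.mul_mem_mul (by rw [← hCsymm m]; exact Set.inv_mem_inv.2 hq) hd)
        exact mem_grpNbhd.2 ⟨p⁻¹ * c, hpc, z, hz, q⁻¹ * d, hqd, heq2⟩
    exact hTcomp.of_isClosed_subset isClosed_closure
      (closure_minimal hsub hTcomp.isClosed)
  · -- (H₂, range f) is not proper
    intro hprop
    have h1c : IsCompact (1 : Set G) := isCompact_singleton
    have hcl := hprop 1 1 h1c h1c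
    rw [grpNbhd_one, grpNbhd_one] at hcl
    have hint : H₂ ∩ Set.range f = Set.range f := by
      apply Set.inter_eq_self_of_subset_right
      rintro x ⟨n, rfl⟩; exact hfH₂ n
    rw [hint] at hcl
    obtain ⟨m, hmK⟩ := K.exists_superset_of_isCompact hcl
    obtain ⟨p, hpK⟩ := K.exists_mem a
    set n := max m p with hn
    apply hfnot n
    have hfn : f n ∈ E n := hCE n (hLC n (hKL n (K.subset (le_max_left m p)
      (hmK (subset_closure (Set.mem_range_self n))))))
    have han : a ∈ E n := hCE n (hLC n (hKL n (K.subset (le_max_right m p) hpK)))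
    exact mem_grpNbhd.2 ⟨f n, hfn, a, ha, a, han, by group⟩

end Main

theorem simGrp_iff_properPair_family_eq {G : Type*} [Group G] [TopologicalSpace G]
    [IsTopologicalGroup G] [LocallyCompactSpace G] [T2Space G] [SigmaCompactSpace G]
    (H₁ H₂ : Set G) (h₁ : H₁.Nonempty) (h₂ : H₂.Nonempty) :
    simGrp H₁ H₂ ↔
      ∀ H' : Set G, H'.Nonempty → (IsProperPair H₁ H' ↔ IsProperPair H₂ H') := by
  constructor
  · rintro ⟨D, hD, h12, h21⟩ H' _
    exact ⟨fun hp => isProperPair_of_sub D hD h21 hp,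
      fun hp => isProperPair_of_sub D hD h12 hp⟩
  · intro hfam
    by_contra hsim
    have hcases : (∀ D : Set G, IsCompact D → ¬ H₁ ⊆ grpNbhd D H₂) ∨
        (∀ D : Set G, IsCompact D → ¬ H₂ ⊆ grpNbhd D H₁) := by
      by_contra h
      push_neg at h
      obtain ⟨⟨Da, hDa, hDa'⟩, ⟨Db, hDb, hDb'⟩⟩ := h
      exact hsim ⟨Da ∪ Db, hDa.union hDb,
        hDa'.trans (grpNbhd_mono Set.subset_union_left),
        hDb'.trans (grpNbhd_mono Set.subset_union_right)⟩
    rcases hcases with hbad | hbad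
    · obtain ⟨H', hH', hp2, hnp1⟩ := exists_separating H₂ H₁ h₂ hbad
      exact hnp1 ((hfam H' hH').2 hp2)
    · obtain ⟨H', hH', hp1, hnp2⟩ := exists_separating H₁ H₂ h₁ hbad
      exact hnp2 ((hfam H' hH').1 hp1)
end

section
/- Let η : Ω → Ω' be a continuous, proper, surjective, non-expanding map between proper metric spaces such that for each x ∈ Ω and y' ∈ Ω' there exists y ∈ η⁻¹(y') with d(x,y) = d'(η(x), y'). Then for every non-empty subset C' of Ω' and every r ≥ 0, one has η⁻¹(N̄_r(C')) = N̄_r(η⁻¹(C')). -/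
theorem preimage_closedNbhd
    {Ω Ω' : Type*} [MetricSpace Ω] [ProperSpace Ω] [MetricSpace Ω'] [ProperSpace Ω']
    (η : Ω → Ω')
    (hcont : Continuous η)
    (hproper : ∀ K : Set Ω', IsCompact K → IsCompact (η ⁻¹' K))
    (hsurj : Function.Surjective η)
    (hnonexp : ∀ x y : Ω, dist (η x) (η y) ≤ dist x y)
    (hfiber : ∀ (x : Ω) (y' : Ω'), ∃ y : Ω, η y = y' ∧ dist x y = dist (η x) y')
    (C' : Set Ω') (hC' : C'.Nonempty) (r : ℝ) (hr : 0 ≤ r) :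
    η ⁻¹' (closedNbhd C' r) = closedNbhd (η ⁻¹' C') r := by
  ext x
  constructor
  · rintro ⟨c', hc', hd⟩
    obtain ⟨y, hy, hdy⟩ := hfiber x c'
    exact ⟨y, by simp [Set.mem_preimage, hy, hc'], by rw [hdy]; exact hd⟩
  · rintro ⟨c, hc, hd⟩
    exact ⟨η c, hc, le_trans (hnonexp x c) hd⟩
end

section
/- Let η : Ω → Ω' be a continuous, proper, surjective, non-expanding map between proper metric spaces such that distances are achieved in fibers (for each x ∈ Ω and y' ∈ Ω' there is y ∈ η⁻¹(y') with d(x,y) = d'(η(x),y')). Define Θ(C) = η⁻¹(η(C)) for C ⊆ Ω. Then for non-empty subsets C₁, C₂ of Ω, the pair (Θ(C₁), Θ(C₂)) is HBI in Ω if and only if the pair (η(C₁), η(C₂)) is HBI in Ω'. -/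
/-- A pair `(A, B)` of subsets of a metric space is HBI if `A ∩ N̄_r(B)` is
bounded for every `r ≥ 0`. -/
def IsHBIPair {M : Type*} [MetricSpace M] (A B : Set M) : Prop :=
  ∀ r ≥ (0 : ℝ), Bornology.IsBounded (A ∩ closedNbhd B r)

theorem theta_HBI_iff_image_HBI
    {Ω Ω' : Type*} [MetricSpace Ω] [ProperSpace Ω] [MetricSpace Ω'] [ProperSpace Ω']
    (η : Ω → Ω')
    (hcont : Continuous η)
    (hproper : ∀ K : Set Ω', IsCompact K → IsCompact (η ⁻¹' K))
    (hsurj : Function.Surjective η)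
    (hnonexp : ∀ x y : Ω, dist (η x) (η y) ≤ dist x y)
    (hfiber : ∀ (x : Ω) (y' : Ω'), ∃ y : Ω, η y = y' ∧ dist x y = dist (η x) y')
    (C₁ C₂ : Set Ω) (h₁ : C₁.Nonempty) (h₂ : C₂.Nonempty) :
    IsHBIPair (η ⁻¹' (η '' C₁)) (η ⁻¹' (η '' C₂)) ↔ IsHBIPair (η '' C₁) (η '' C₂) := by
  constructor
  · intro h r hr
    have hsub : (η '' C₁) ∩ closedNbhd (η '' C₂) r ⊆
        η '' ((η ⁻¹' (η '' C₁)) ∩ closedNbhd (η ⁻¹' (η '' C₂)) r) := by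
      rintro y' ⟨⟨c₁, hc₁, rfl⟩, c₂', ⟨c₂, hc₂, rfl⟩, hd⟩
      obtain ⟨y, hy, hdy⟩ := hfiber c₁ (η c₂)
      exact ⟨c₁, ⟨⟨c₁, hc₁, rfl⟩, y, ⟨c₂, hc₂, hy.symm⟩, by rw [hdy]; exact hd⟩, rfl⟩
    refine Bornology.IsBounded.subset ?_ hsub
    obtain ⟨K, hK⟩ := Metric.isBounded_iff.1 (h r hr)
    refine Metric.isBounded_iff.2 ⟨K, ?_⟩
    rintro _ ⟨a, ha, rfl⟩ _ ⟨b, hb, rfl⟩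
    exact le_trans (hnonexp a b) (hK ha hb)
  · intro h r hr
    have hsub : (η ⁻¹' (η '' C₁)) ∩ closedNbhd (η ⁻¹' (η '' C₂)) r ⊆
        η ⁻¹' ((η '' C₁) ∩ closedNbhd (η '' C₂) r) := by
      rintro x ⟨hx1, y, hy, hd⟩
      exact ⟨hx1, η y, hy, le_trans (hnonexp x y) hd⟩
    refine Bornology.IsBounded.subset ?_ hsub
    have hcK : IsCompact (closure ((η '' C₁) ∩ closedNbhd (η '' C₂) r)) :=
      Metric.isCompact_of_isClosed_isBounded isClosed_closure (h r hr).closure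
    exact (hproper _ hcK).isBounded.subset (Set.preimage_mono subset_closure)
end

section
/- Let G be a locally compact Hausdorff group acting continuously, properly, isometrically and transitively on a proper metric space (M,d) with base point * and isotropy group K. For non-empty subsets H₁, H₂ of G: if S^{H₁}(*) ∼ S^{H₂}(*) in M (finite Hausdorff distance), then H₁ ∼ H₂ in G (i.e., there is a compact D ⊆ G with H₁ ⊆ D·H₂·D⁻¹ and H₂ ⊆ D·H₁·D⁻¹). -/
open scoped Pointwise

private lemma aux_subset
    {G : Type*} [Group G] {M : Type*} [MetricSpace M] [MulAction G M]
    (hisom : ∀ g : G, Isometry fun x : M => g • x)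
    (star : M) (H₁ H₂ : Set G) (r : ℝ) (hr : 0 ≤ r)
    (hsub : ((fun g : G => g • star) '' ({k : G | k • star = star} * H₁)) ⊆
      closedNbhd ((fun g : G => g • star) '' ({k : G | k • star = star} * H₂)) r) :
    H₁ ⊆ {g : G | dist (g • star) star ≤ r} * H₂ * {g : G | dist (g • star) star ≤ r}⁻¹ := by
  intro g hg
  have hgmem : g • star ∈ (fun g : G => g • star) '' ({k : G | k • star = star} * H₁) := by
    refine ⟨g, ?_, rfl⟩
    have : (1 : G) * g ∈ {k : G | k • star = star} * H₁ :=
      Set.mul_mem_mul (by simp [Set.mem_setOf_eq]) hg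
    simpa using this
  obtain ⟨c, ⟨a, ha, rfl⟩, hd⟩ := hsub hgmem
  obtain ⟨k, hk, h, hh, rfl⟩ := ha
  set d : G := (k * h)⁻¹ * g with hdef
  have hdd : dist (d • star) star ≤ r := by
    have := (hisom (k * h)).dist_eq (d • star) star
    calc dist (d • star) star = dist ((k * h) • d • star) ((k * h) • star) := this.symm
      _ = dist (g • star) ((k * h) • star) := by
          rw [smul_smul, hdef, mul_inv_cancel_left]
      _ ≤ r := hd
  have hdinv : dist (d⁻¹ • star) star ≤ r := by
    have h2 := (hisom d).dist_eq (d⁻¹ • star) star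
    have : dist star (d • star) = dist (d⁻¹ • star) star := by
      simpa [smul_smul] using h2
    rw [this.symm, dist_comm]; exact hdd
  have hkmem : k ∈ {g : G | dist (g • star) star ≤ r} := by
    simp only [Set.mem_setOf_eq] at hk ⊢
    rw [hk, dist_self]; exact hr
  have : (k * h) * d ∈ {g : G | dist (g • star) star ≤ r} * H₂ *
      {g : G | dist (g • star) star ≤ r}⁻¹ :=
    Set.mul_mem_mul (Set.mul_mem_mul hkmem hh) (by simpa [Set.mem_inv] using hdinv)
  have heq : (k * h) * d = g := by rw [hdef, mul_inv_cancel_left]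
  rwa [heq] at this

theorem sim_in_G_of_sim_SH
    {G : Type*} [Group G] [TopologicalSpace G] [IsTopologicalGroup G]
    [LocallyCompactSpace G] [T2Space G]
    {M : Type*} [MetricSpace M] [ProperSpace M] [MulAction G M]
    (hcont : Continuous fun p : G × M => p.1 • p.2)
    (hisom : ∀ g : G, Isometry fun x : M => g • x)
    (hproper : ∀ D : Set M, IsCompact D →
      IsCompact {g : G | ((fun x : M => g • x) '' D ∩ D).Nonempty})
    (htrans : ∀ x y : M, ∃ g : G, g • x = y)
    (star : M) (H₁ H₂ : Set G) (h₁ : H₁.Nonempty) (h₂ : H₂.Nonempty)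
    (hsim : simSet
      ((fun g : G => g • star) '' ({k : G | k • star = star} * H₁))
      ((fun g : G => g • star) '' ({k : G | k • star = star} * H₂))) :
    ∃ D : Set G, IsCompact D ∧ H₁ ⊆ D * H₂ * D⁻¹ ∧ H₂ ⊆ D * H₁ * D⁻¹ := by
  obtain ⟨r, hr, hs₁, hs₂⟩ := hsim
  refine ⟨{g : G | dist (g • star) star ≤ r}, ?_, ?_, ?_⟩
  · -- compactness
    have hball : IsCompact (Metric.closedBall star r) := isCompact_closedBall star r
    have hbig := hproper _ hball
    refine hbig.of_isClosed_subset ?_ ?_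
    · have hc : Continuous fun g : G => g • star :=
        hcont.comp (continuous_id.prodMk continuous_const)
      have : {g : G | dist (g • star) star ≤ r} =
          (fun g : G => g • star) ⁻¹' Metric.closedBall star r := by
        ext g; simp [Metric.mem_closedBall]
      rw [this]
      exact (Metric.isClosed_closedBall).preimage hc
    · intro g hg
      refine ⟨g • star, ⟨star, ?_, rfl⟩, ?_⟩
      · simpa [Metric.mem_closedBall] using hr
      · simpa [Metric.mem_closedBall] using hg
  · exact aux_subset hisom star H₁ H₂ r hr hs₁
  · exact aux_subset hisom star H₂ H₁ r hr hs₂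
end

section
/- Let G be a group acting isometrically and transitively on a proper metric space (M,d) satisfying Property (S): for each r ≥ 0 there exists τ(r) ≥ 0 such that for any p₀, p, q ∈ M with d(p,p₀) ≤ r, there is g ∈ G with g·p = p₀ and d(q, g·q) ≤ τ(r). Then for any base point *, any non-empty closed subset H of G, and any r ≥ 0, there exists τ ≥ 0 such that π⁻¹(N̄_r(*))·π(H) ⊆ N̄_τ(K·H·*), where π(g) = g·* and K is the isotropy group at *. -/
open scoped Pointwise

theorem SH_ball_subset_nbhd
    {G : Type*} [Group G] [TopologicalSpace G]
    {M : Type*} [MetricSpace M] [ProperSpace M] [MulAction G M]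
    (hisom : ∀ g : G, Isometry fun x : M => g • x)
    (htrans : ∀ x y : M, ∃ g : G, g • x = y)
    -- Property (S)
    (hS : ∀ r ≥ (0 : ℝ), ∃ τ ≥ (0 : ℝ), ∀ p₀ p q : M, dist p p₀ ≤ r →
      ∃ g : G, g • p = p₀ ∧ dist q (g • q) ≤ τ)
    (star : M) (H : Set G) (hHcl : IsClosed H) (hH : H.Nonempty)
    (r : ℝ) (hr : 0 ≤ r) :
    ∃ τ ≥ (0 : ℝ),
      {x : M | ∃ g : G, g • star ∈ closedNbhd {star} r ∧ ∃ h ∈ H, x = g • (h • star)}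
        ⊆ closedNbhd ((fun g : G => g • star) '' ({k : G | k • star = star} * H)) τ := by
  obtain ⟨τ, hτ, P⟩ := hS r hr
  refine ⟨τ, hτ, ?_⟩
  rintro x ⟨g, ⟨c, hc, hdc⟩, h, hh, rfl⟩
  rw [show c = star from hc] at hdc
  obtain ⟨g', hg', hdist⟩ := P star (g • star) (g • h • star) hdc
  refine ⟨(g' * g * h) • star, ⟨g' * g * h, Set.mul_mem_mul (a := g' * g) ?_ hh, rfl⟩, ?_⟩
  · show (g' * g) • star = star
    rw [mul_smul]; exact hg'
  · calc dist (g • h • star) ((g' * g * h) • star)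
        = dist (g • h • star) (g' • g • h • star) := by rw [mul_smul, mul_smul]
      _ ≤ τ := hdist
end

section
/- Let Ω be a proper CAT(0) space with an isometric action of a group G, and M a closed G-orbit in Ω. Suppose there exists b ≥ 0 such that for any p, q ∈ M there is a geodesic ray c issuing from p with min_{t≥0} d(q, c(t)) ≤ b and such that the stabilizer in G of the asymptote class c(∞) acts transitively on M. Then M has Property (S): for each r ≥ 0 there exists τ(r) ≥ 0 (one may take τ(r) = r + 2b) such that for any p₀, p, q ∈ M with d(p,p₀) ≤ r, there exists g ∈ G with g·p = p₀ and d(q, g·q) ≤ τ(r). -/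
/-- A geodesic ray: isometric on `[0, ∞)`. -/
def IsGeodesicRay {Ω : Type*} [MetricSpace Ω] (c : ℝ → Ω) : Prop :=
  ∀ s t : ℝ, 0 ≤ s → 0 ≤ t → dist (c s) (c t) = |s - t|

/-- Two geodesic rays are asymptotic if they stay at bounded distance. -/
def AsymptoticRays {Ω : Type*} [MetricSpace Ω] (c c' : ℝ → Ω) : Prop :=
  ∃ a : ℝ, ∀ t : ℝ, 0 ≤ t → dist (c t) (c' t) ≤ a

/-- A geodesic segment from `x` to `y`, affinely parametrized on `[0,1]`. -/
def IsGeodesicSegment {Ω : Type*} [MetricSpace Ω] (γ : ℝ → Ω) (x y : Ω) : Prop :=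
  γ 0 = x ∧ γ 1 = y ∧ ∀ s t : ℝ, s ∈ Set.Icc (0 : ℝ) 1 → t ∈ Set.Icc (0 : ℝ) 1 →
    dist (γ s) (γ t) = |s - t| * dist x y

/-- A CAT(0) space: a geodesic metric space in which every geodesic triangle is at
least as thin as its Euclidean comparison triangle (comparison inequality in the
equivalent quadratic form). -/
def IsCAT0 (Ω : Type*) [MetricSpace Ω] : Prop :=
  (∀ x y : Ω, ∃ γ : ℝ → Ω, IsGeodesicSegment γ x y) ∧
  ∀ (x y z : Ω) (γ : ℝ → Ω), IsGeodesicSegment γ y z → ∀ t ∈ Set.Icc (0 : ℝ) 1,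
    dist x (γ t) ^ 2 ≤
      (1 - t) * dist x y ^ 2 + t * dist x z ^ 2 - t * (1 - t) * dist y z ^ 2

/-- Two geodesic segments with the same start point diverge linearly. -/
lemma cone_lemma {Ω : Type*} [MetricSpace Ω] (hΩ : IsCAT0 Ω)
    {σ τ : ℝ → Ω} {x x1 y1 : Ω}
    (hσ : IsGeodesicSegment σ x x1) (hτ : IsGeodesicSegment τ x y1)
    {t : ℝ} (ht : t ∈ Set.Icc (0 : ℝ) 1) :
    dist (σ t) (τ t) ≤ t * dist x1 y1 := by
  obtain ⟨hσ0, hσ1, hσd⟩ := hσ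
  obtain ⟨hτ0, hτ1, hτd⟩ := hτ
  have h01 : (0:ℝ) ∈ Set.Icc (0:ℝ) 1 := by constructor <;> norm_num
  have h11 : (1:ℝ) ∈ Set.Icc (0:ℝ) 1 := by constructor <;> norm_num
  -- step 1: x := τ 1 against geodesic σ
  have h1 := hΩ.2 (τ 1) x x1 σ ⟨hσ0, hσ1, hσd⟩ t ht
  -- step 2: x := σ t against geodesic τ
  have h2 := hΩ.2 (σ t) x y1 τ ⟨hτ0, hτ1, hτd⟩ t ht
  have hσtx : dist (σ t) x = t * dist x x1 := by
    have h := hσd t 0 ht h01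
    rw [hσ0] at h
    rw [h, sub_zero, abs_of_nonneg ht.1]
  have hτ1x : dist (τ 1) x = dist x y1 := by
    have h := hτd 1 0 h11 h01
    rw [hτ0] at h
    rw [h, sub_zero, abs_one, one_mul]
  have hτ1σ1 : dist (τ 1) x1 = dist x1 y1 := by rw [hτ1, dist_comm]
  have hσt1 : dist (τ 1) (σ t) = dist (σ t) (τ 1) := dist_comm _ _
  rw [hτ1x, hτ1σ1] at h1
  rw [hσtx] at h2
  set L := dist x x1 with hL
  set L' := dist x y1 with hL'
  set D := dist x1 y1 with hD
  have hd : dist (σ t) (τ t) ^ 2 ≤ (t * D) ^ 2 := by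
    have h1' : dist (σ t) y1 ^ 2 ≤ (1 - t) * L' ^ 2 + t * D ^ 2 - t * (1 - t) * L ^ 2 := by
      rw [← hτ1, ← hσt1]; linarith [h1]
    nlinarith [h2, mul_le_mul_of_nonneg_left h1' ht.1, ht.1, ht.2]
  have h0 : (0:ℝ) ≤ t * D := mul_nonneg ht.1 dist_nonneg
  nlinarith [dist_nonneg (x := σ t) (y := τ t), hd, h0]

lemma reverse_segment {Ω : Type*} [MetricSpace Ω] {γ : ℝ → Ω} {x y : Ω}
    (h : IsGeodesicSegment γ x y) : IsGeodesicSegment (fun s => γ (1 - s)) y x := by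
  obtain ⟨h0, h1, hd⟩ := h
  refine ⟨by simpa using h1, by simpa using h0, ?_⟩
  intro s t hs ht
  have hs' : (1 - s) ∈ Set.Icc (0:ℝ) 1 := ⟨by linarith [hs.2], by linarith [hs.1]⟩
  have ht' : (1 - t) ∈ Set.Icc (0:ℝ) 1 := ⟨by linarith [ht.2], by linarith [ht.1]⟩
  rw [hd _ _ hs' ht', dist_comm x y]
  congr 1
  rw [show (1 - s) - (1 - t) = t - s by ring, abs_sub_comm]

/-- Convexity of distance between geodesic segments in a CAT(0) space. -/
lemma convexity_lemma {Ω : Type*} [MetricSpace Ω] (hΩ : IsCAT0 Ω)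
    {α β : ℝ → Ω} {x0 x1 y0 y1 : Ω}
    (hα : IsGeodesicSegment α x0 x1) (hβ : IsGeodesicSegment β y0 y1)
    {t : ℝ} (ht : t ∈ Set.Icc (0 : ℝ) 1) :
    dist (α t) (β t) ≤ (1 - t) * dist x0 y0 + t * dist x1 y1 := by
  obtain ⟨γ, hγ⟩ := hΩ.1 x0 y1
  have h1 : dist (α t) (γ t) ≤ t * dist x1 y1 := cone_lemma hΩ hα hγ ht
  have ht' : (1 - t) ∈ Set.Icc (0:ℝ) 1 := ⟨by linarith [ht.2], by linarith [ht.1]⟩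
  have h2 : dist ((fun s => γ (1 - s)) (1 - t)) ((fun s => β (1 - s)) (1 - t)) ≤
      (1 - t) * dist x0 y0 :=
    cone_lemma hΩ (reverse_segment hγ) (reverse_segment hβ) ht'
  simp only [sub_sub_cancel] at h2
  calc dist (α t) (β t) ≤ dist (α t) (γ t) + dist (γ t) (β t) := dist_triangle _ _ _
    _ ≤ t * dist x1 y1 + (1 - t) * dist x0 y0 := add_le_add h1 h2
    _ = (1 - t) * dist x0 y0 + t * dist x1 y1 := by ring

/-- For asymptotic rays in a CAT(0) space, the distance at any nonnegative time
is at most the distance at time 0. -/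
lemma asymptotic_nonincreasing {Ω : Type*} [MetricSpace Ω] (hΩ : IsCAT0 Ω)
    {c c' : ℝ → Ω} (hc : IsGeodesicRay c) (hc' : IsGeodesicRay c')
    (ha : AsymptoticRays c c') {t₀ : ℝ} (ht₀ : 0 ≤ t₀) :
    dist (c t₀) (c' t₀) ≤ dist (c 0) (c' 0) := by
  obtain ⟨a, ha⟩ := ha
  have ha0 : 0 ≤ a := le_trans dist_nonneg (ha 0 le_rfl)
  refine le_of_forall_pos_le_add ?_
  intro ε hε
  obtain ⟨T, hTpos, hTt₀, hTa⟩ : ∃ T : ℝ, 0 < T ∧ t₀ ≤ T ∧ t₀ * a ≤ T * ε := by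
    refine ⟨(max (t₀ * a / ε) t₀) + 1, ?_, ?_, ?_⟩
    · have : 0 ≤ max (t₀ * a / ε) t₀ := le_max_of_le_right ht₀
      linarith
    · have := le_max_right (t₀ * a / ε) t₀; linarith
    · have h1 : t₀ * a / ε ≤ (max (t₀ * a / ε) t₀) + 1 := by
        have := le_max_left (t₀ * a / ε) t₀; linarith
      calc t₀ * a = (t₀ * a / ε) * ε := by field_simp
        _ ≤ ((max (t₀ * a / ε) t₀) + 1) * ε := by nlinarith
  -- rescale the rays to segments on [0,1]
  have mkseg : ∀ d : ℝ → Ω, IsGeodesicRay d →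
      IsGeodesicSegment (fun s => d (s * T)) (d 0) (d T) := by
    intro d hd
    refine ⟨by simp, by simp, ?_⟩
    intro s t hs ht
    have h1 : dist (d (s * T)) (d (t * T)) = |s * T - t * T| :=
      hd _ _ (mul_nonneg hs.1 hTpos.le) (mul_nonneg ht.1 hTpos.le)
    have h2 : dist (d 0) (d T) = T := by
      rw [hd 0 T le_rfl hTpos.le]; rw [abs_of_nonpos (by linarith)]; ring
    rw [h1, h2, show s * T - t * T = (s - t) * T by ring, abs_mul,
      abs_of_nonneg hTpos.le]
  have hlam : t₀ / T ∈ Set.Icc (0:ℝ) 1 := by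
    constructor
    · exact div_nonneg ht₀ hTpos.le
    · rw [div_le_one hTpos]; exact hTt₀
  have hconv := convexity_lemma hΩ (mkseg c hc) (mkseg c' hc') hlam
  have heq : t₀ / T * T = t₀ := by field_simp
  rw [heq] at hconv
  have hcT : dist (c T) (c' T) ≤ a := ha T hTpos.le
  have h01 : (0:ℝ) ≤ 1 - t₀ / T := by linarith [hlam.2]
  calc dist (c t₀) (c' t₀)
      ≤ (1 - t₀ / T) * dist (c 0) (c' 0) + t₀ / T * dist (c T) (c' T) := hconv
    _ ≤ 1 * dist (c 0) (c' 0) + t₀ / T * a := by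
        have := dist_nonneg (x := c 0) (y := c' 0)
        have h2 : t₀ / T * dist (c T) (c' T) ≤ t₀ / T * a :=
          mul_le_mul_of_nonneg_left hcT hlam.1
        nlinarith [hlam.2, mul_nonneg hlam.1 this, h2]
    _ ≤ dist (c 0) (c' 0) + ε := by
        have : t₀ / T * a ≤ ε := by
          rw [div_mul_eq_mul_div, div_le_iff₀ hTpos]
          linarith [hTa]
        linarith

theorem propertyS_of_ray_stabilizer_transitive
    {Ω : Type*} [MetricSpace Ω] [ProperSpace Ω] (hΩ : IsCAT0 Ω)
    {G : Type*} [Group G] [MulAction G Ω]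
    (hisom : ∀ g : G, Isometry fun x : Ω => g • x)
    (M : Set Ω) (hMorbit : ∃ x : Ω, M = MulAction.orbit G x) (hMcl : IsClosed M)
    (b : ℝ) (hb : 0 ≤ b)
    (hray : ∀ p ∈ M, ∀ q ∈ M, ∃ c : ℝ → Ω, IsGeodesicRay c ∧ c 0 = p ∧
      (∃ t : ℝ, 0 ≤ t ∧ dist q (c t) ≤ b) ∧
      -- the stabilizer `P_{c(∞)}` of the asymptote class of `c` acts transitively on `M`
      (∀ x ∈ M, ∀ y ∈ M, ∃ g : G,
        AsymptoticRays (fun t => g • c t) c ∧ g • x = y)) :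
    -- Property (S) with `τ(r) = r + 2b`
    ∀ r ≥ (0 : ℝ), ∀ p₀ ∈ M, ∀ p ∈ M, ∀ q ∈ M, dist p p₀ ≤ r →
      ∃ g : G, g • p = p₀ ∧ dist q (g • q) ≤ r + 2 * b := by
  intro r hr p₀ hp₀ p hp q hq hppr
  obtain ⟨c, hcray, hc0, ⟨t₀, ht₀, hqb⟩, htrans⟩ := hray p hp q hq
  obtain ⟨g, hasym, hgp⟩ := htrans p hp p₀ hp₀
  refine ⟨g, hgp, ?_⟩
  have hgc : IsGeodesicRay (fun t => g • c t) := by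
    intro s t hs ht
    simpa [(hisom g).dist_eq] using hcray s t hs ht
  have hkey : dist (g • c t₀) (c t₀) ≤ dist (g • c 0) (c 0) :=
    asymptotic_nonincreasing hΩ hgc hcray hasym ht₀
  have hgc0 : dist (g • c 0) (c 0) ≤ r := by
    rw [hc0, hgp]; rw [dist_comm]; exact hppr
  have hgq : dist (g • c t₀) (g • q) = dist q (c t₀) := by
    rw [(hisom g).dist_eq, dist_comm]
  calc dist q (g • q)
      ≤ dist q (c t₀) + dist (c t₀) (g • c t₀) + dist (g • c t₀) (g • q) :=
        dist_triangle4 _ _ _ _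
    _ ≤ b + r + b := by
        rw [hgq, dist_comm (c t₀)]
        exact add_le_add (add_le_add hqb (hkey.trans hgc0)) hqb
    _ = r + 2 * b := by ring
end
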